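/- For a finite Coxeter group W and J ⊆ S, the set X_J of minimal length right coset representatives of W_J equals the set of prefixes of the longest coset representative w_J w_0, where u is a prefix of w means ℓ(u⁻¹w) = ℓ(w) − ℓ(u). -/

import Mathlib

/-- The set `X_J = {x : ℓ(sx) > ℓ(x) for all s ∈ J}`. -/
def CoxX {B W : Type*} [Group W] {M : CoxeterMatrix B} (cs : CoxeterSystem M W)
    (J : Set B) : Set W :=
  {x | ∀ s ∈ J, cs.length (cs.simple s * x) > cs.length x}

/-- The standard parabolic subgroup `W_J`. -/
def CoxParabolic {B W : Type*} [Group W] {M : CoxeterMatrix B} (cs : CoxeterSystem M W)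
    (J : Set B) : Subgroup W :=
  Subgroup.closure (cs.simple '' J)

/-- `u` is a prefix of `w` in the weak Bruhat order: `ℓ(u⁻¹w) = ℓ(w) - ℓ(u)`. -/
def CoxIsPrefix {B W : Type*} [Group W] {M : CoxeterMatrix B} (cs : CoxeterSystem M W)
    (u w : W) : Prop :=
  cs.length u + cs.length (u⁻¹ * w) = cs.length w


open List

namespace CoxAux

/-- The group used to define the reflection-parity cocycle: pairs `(f, u)` with
multiplication `(f,u)(g,v) = (f + g ∘ conj u⁻¹, uv)`. -/
@[ext] structure NuG (W : Type*) where
  f : W → ZMod 2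
  u : W

namespace NuG

variable {W : Type*} [Group W]

instance : Mul (NuG W) := ⟨fun a b => ⟨a.f + fun x => b.f (a.u⁻¹ * x * a.u), a.u * b.u⟩⟩
instance : One (NuG W) := ⟨⟨0, 1⟩⟩
instance : Inv (NuG W) := ⟨fun a => ⟨fun x => a.f (a.u * x * a.u⁻¹), a.u⁻¹⟩⟩

lemma mul_f (a b : NuG W) (x : W) : (a * b).f x = a.f x + b.f (a.u⁻¹ * x * a.u) := rfl
lemma mul_u (a b : NuG W) : (a * b).u = a.u * b.u := rfl
lemma one_f (x : W) : (1 : NuG W).f x = 0 := rfl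
lemma one_u : (1 : NuG W).u = 1 := rfl

instance : Group (NuG W) where
  mul_assoc a b c := by
    ext x
    · simp [mul_f, mul_u, mul_assoc, add_assoc]
    · simp [mul_u, mul_assoc]
  one_mul a := by
    ext x
    · simp [mul_f, one_f, one_u]
    · simp [mul_u, one_u]
  mul_one a := by
    ext x
    · simp [mul_f, one_f, one_u]
    · simp [mul_u, one_u]
  inv_mul_cancel a := by
    ext x
    · show a.f (a.u * x * a.u⁻¹) + a.f (a.u⁻¹⁻¹ * x * a.u⁻¹) = 0
      rw [inv_inv, CharTwo.add_self_eq_zero]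
    · show a.u⁻¹ * a.u = 1
      simp

/-- Projection to the group component. -/
def proj : NuG W →* W where
  toFun := NuG.u
  map_one' := rfl
  map_mul' _ _ := rfl

lemma pow_f (p : NuG W) (m : ℕ) (x : W) :
    (p ^ m).f x = ∑ k ∈ Finset.range m, p.f ((p.u ^ k)⁻¹ * x * p.u ^ k) := by
  induction m generalizing x with
  | zero => simp [one_f]
  | succ m ih =>
    rw [pow_succ']
    rw [mul_f, ih, Finset.sum_range_succ']
    simp only [pow_zero, inv_one, one_mul, mul_one]
    rw [add_comm]
    congr 1
    apply Finset.sum_congr rfl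
    intro k _
    congr 1
    simp [pow_succ', mul_inv_rev, mul_assoc]

end NuG

end CoxAux

section Stage2

open List CoxeterSystem

namespace CoxAux

variable {B W : Type*} [Group W] {M : CoxeterMatrix B} (cs : CoxeterSystem M W)

local prefix:100 "s" => cs.simple
local prefix:100 "π" => cs.wordProd
local prefix:100 "ℓ" => cs.length

open Classical in
/-- indicator function -/
noncomputable def ind (w : W) : W → ZMod 2 := fun x => if x = w then 1 else 0

lemma ind_conj (w u x : W) : ind w (u⁻¹ * x * u) = ind (u * w * u⁻¹) x := by
  unfold ind
  by_cases h : x = u * w * u⁻¹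
  · rw [if_pos h, if_pos (by rw [h]; group)]
  · rw [if_neg h, if_neg (fun hc => h (by rw [← hc]; group))]

noncomputable def gen (i : B) : NuG W := ⟨ind (s i), s i⟩

lemma NuG.pow_u (p : NuG W) (m : ℕ) : (p ^ m).u = p.u ^ m := by
  induction m with
  | zero => rw [pow_zero, pow_zero, NuG.one_u]
  | succ m ih => rw [pow_succ, pow_succ, NuG.mul_u, ih]

lemma simple_conj_pow_inv (i j : B) (k : ℕ) :
    s i * ((s i * s j) ^ k)⁻¹ = (s i * s j) ^ k * s i := by
  induction k with
  | zero => simp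
  | succ k ih =>
    have hc : (s i * s j)⁻¹ = s j * s i := by
      rw [mul_inv_rev, cs.inv_simple, cs.inv_simple]
    calc s i * ((s i * s j) ^ (k+1))⁻¹
        = s i * (((s i * s j) ^ k) * (s i * s j))⁻¹ := by rw [pow_succ]
      _ = s i * ((s i * s j)⁻¹ * ((s i * s j) ^ k)⁻¹) := by rw [mul_inv_rev]
      _ = (s i * s j) * (s i * ((s i * s j) ^ k)⁻¹) := by rw [hc]; simp only [mul_assoc]
      _ = (s i * s j) * ((s i * s j) ^ k * s i) := by rw [ih]
      _ = (s i * s j) ^ (k+1) * s i := by rw [pow_succ']; simp only [mul_assoc]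

private lemma pair_sum (g : ℕ → ZMod 2) (m : ℕ) :
    ∑ k ∈ Finset.range m, (g (2*k) + g (2*k+1)) = ∑ n ∈ Finset.range (2*m), g n := by
  induction m with
  | zero => simp
  | succ m ih =>
    rw [Finset.sum_range_succ, ih, Nat.mul_succ, Finset.sum_range_succ, Finset.sum_range_succ]
    ring

lemma gen_liftable : M.IsLiftable (fun i => gen cs i) := by
  intro i j
  set m := M i j with hm
  ext x
  · show ((gen cs i * gen cs j) ^ m).f x = 0
    rw [NuG.pow_f]
    have hu : (gen cs i * gen cs j).u = s i * s j := rfl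
    have hf : ∀ y, (gen cs i * gen cs j).f y = ind (s i) y + ind (s j) ((s i)⁻¹ * y * s i) :=
      fun y => rfl
    have hterm : ∀ k, (gen cs i * gen cs j).f (((s i * s j) ^ k)⁻¹ * x * (s i * s j) ^ k)
        = ind ((s i * s j) ^ (2*k) * s i) x + ind ((s i * s j) ^ (2*k+1) * s i) x := by
      intro k
      rw [hf]
      have e1 : (s i * s j) ^ k * s i * ((s i * s j) ^ k)⁻¹ = (s i * s j) ^ (2*k) * s i := by
        rw [mul_assoc, simple_conj_pow_inv, two_mul, pow_add, mul_assoc]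
      have e2' : (s i * s j) ^ k * s i * s j * ((s i * s j) ^ k * s i)⁻¹
          = (s i * s j) ^ (2*k+1) * s i := by
        rw [mul_inv_rev, cs.inv_simple]
        calc (s i * s j) ^ k * s i * s j * (s i * ((s i * s j) ^ k)⁻¹)
            = (s i * s j) ^ k * ((s i * s j) * (s i * ((s i * s j) ^ k)⁻¹)) := by
              simp only [mul_assoc]
          _ = (s i * s j) ^ k * ((s i * s j) * ((s i * s j) ^ k * s i)) := by
              rw [simple_conj_pow_inv]
          _ = (s i * s j) ^ k * (s i * s j) * (s i * s j) ^ k * s i := by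
              simp only [mul_assoc]
          _ = (s i * s j) ^ (2*k+1) * s i := by
              rw [← pow_succ, ← pow_add, show k+1+k = 2*k+1 from by omega]
      have e2 : ind (s j) ((s i)⁻¹ * (((s i * s j) ^ k)⁻¹ * x * (s i * s j) ^ k) * s i)
          = ind ((s i * s j) ^ (2*k+1) * s i) x := by
        have h3 : (s i)⁻¹ * (((s i * s j) ^ k)⁻¹ * x * (s i * s j) ^ k) * s i
            = ((s i * s j) ^ k * s i)⁻¹ * x * ((s i * s j) ^ k * s i) := by group
        rw [h3, ind_conj, ← e2']
      rw [e2]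
      congr 1
      rw [ind_conj, e1]
    rw [hu]
    calc ∑ k ∈ Finset.range m, (gen cs i * gen cs j).f (((s i * s j) ^ k)⁻¹ * x * (s i * s j) ^ k)
        = ∑ k ∈ Finset.range m, (ind ((s i * s j) ^ (2*k) * s i) x
            + ind ((s i * s j) ^ (2*k+1) * s i) x) := by
          exact Finset.sum_congr rfl (fun k _ => hterm k)
      _ = ∑ n ∈ Finset.range (2*m), ind ((s i * s j) ^ n * s i) x :=
          pair_sum (fun n => ind ((s i * s j) ^ n * s i) x) m
      _ = 0 := by
          rw [two_mul, Finset.sum_range_add]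
          have : ∀ n, ind ((s i * s j) ^ (m + n) * s i) x = ind ((s i * s j) ^ n * s i) x := by
            intro n
            rw [pow_add, hm, cs.simple_mul_simple_pow i j, one_mul]
          rw [Finset.sum_congr rfl (fun n _ => this n), CharTwo.add_self_eq_zero]
  · show ((gen cs i * gen cs j) ^ m).u = 1
    rw [NuG.pow_u]
    show ((gen cs i).u * (gen cs j).u) ^ m = 1
    show (s i * s j) ^ m = 1
    exact cs.simple_mul_simple_pow i j

/-- The parity cocycle homomorphism. -/
noncomputable def Phi : W →* NuG W := cs.lift ⟨fun i => gen cs i, gen_liftable cs⟩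

lemma Phi_simple (i : B) : Phi cs (s i) = gen cs i :=
  cs.lift_apply_simple (gen_liftable cs) i

lemma Phi_u (w : W) : (Phi cs w).u = w := by
  have : (NuG.proj.comp (Phi cs)) = MonoidHom.id W := by
    apply cs.ext_simple
    intro i
    simp only [MonoidHom.comp_apply, Phi_simple, MonoidHom.id_apply]
    rfl
  exact DFunLike.congr_fun this w

/-- `nu w t = 1` iff `t` is a left inversion of `w`. -/
noncomputable def nu (w t : W) : ZMod 2 := (Phi cs w).f t

lemma nu_mul (u v x : W) : nu cs (u * v) x = nu cs u x + nu cs v (u⁻¹ * x * u) := by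
  unfold nu
  rw [map_mul, NuG.mul_f, Phi_u]

lemma nu_one (x : W) : nu cs 1 x = 0 := by
  unfold nu; rw [map_one]; rfl

lemma nu_simple (i : B) (x : W) : nu cs (s i) x = ind (s i) x := by
  unfold nu; rw [Phi_simple]; rfl

lemma nu_inv (u x : W) : nu cs u⁻¹ (u⁻¹ * x * u) = nu cs u x := by
  have h := nu_mul cs u u⁻¹ x
  rw [mul_inv_cancel, nu_one] at h
  have := CharTwo.add_self_eq_zero (nu cs u x)
  -- nu u x + nu u⁻¹ (...) = 0 and nu u x + nu u x = 0
  have h2 : nu cs u x + nu cs u⁻¹ (u⁻¹ * x * u) = nu cs u x + nu cs u x := by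
    rw [this, ← h]
  exact (add_left_cancel h2)

end CoxAux

end Stage2

section Stage3

open List CoxeterSystem

namespace CoxAux

variable {B W : Type*} [Group W] {M : CoxeterMatrix B} (cs : CoxeterSystem M W)

local prefix:100 "s" => cs.simple
local prefix:100 "π" => cs.wordProd
local prefix:100 "ℓ" => cs.length

lemma zmod_two_cases : ∀ x : ZMod 2, x = 0 ∨ x = 1 := by decide

lemma lis_cons (i : B) (ω : List B) :
    cs.leftInvSeq (i :: ω) = s i :: List.map (⇑(MulAut.conj (s i))) (cs.leftInvSeq ω) := rfl

lemma nu_mem_iff {ω : List B} (hω : cs.IsReduced ω) (t : W) :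
    nu cs (π ω) t = 1 ↔ t ∈ cs.leftInvSeq ω := by
  induction ω generalizing t with
  | nil =>
    simp only [wordProd_nil, nu_one, leftInvSeq_nil, List.not_mem_nil, iff_false]
    intro h
    exact absurd h (by decide)
  | cons i ω ih =>
    have hω' : cs.IsReduced ω := by
      have := hω.drop (j := 1)
      simpa using this
    have hnd := hω.nodup_leftInvSeq
    rw [lis_cons] at hnd
    have hhead : s i ∉ List.map (⇑(MulAut.conj (s i))) (cs.leftInvSeq ω) :=
      (List.nodup_cons.mp hnd).1
    have hsnotin : s i ∉ cs.leftInvSeq ω := by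
      intro hin
      apply hhead
      refine List.mem_map.mpr ⟨s i, hin, ?_⟩
      simp only [MulAut.conj_apply, cs.inv_simple]
      rw [cs.simple_mul_simple_self, one_mul]
    rw [wordProd_cons, nu_mul, nu_simple, cs.inv_simple, lis_cons]
    by_cases ht : t = s i
    · subst ht
      have harg : s i * (s i * s i) = s i := by
        rw [cs.simple_mul_simple_self, mul_one]
      have : s i * s i * s i = s i := by rw [cs.simple_mul_simple_self, one_mul]
      rw [this]
      have h0 : nu cs (π ω) (s i) = 0 := by
        rcases zmod_two_cases (nu cs (π ω) (s i)) with h | h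
        · exact h
        · exact absurd ((ih hω' (s i)).mp h) hsnotin
      rw [h0]
      unfold ind
      simp
    · have hind : ind (s i) t = 0 := by unfold ind; rw [if_neg ht]
      rw [hind, zero_add, ih hω' (s i * t * s i), List.mem_cons]
      constructor
      · intro h
        right
        refine List.mem_map.mpr ⟨s i * t * s i, h, ?_⟩
        simp only [MulAut.conj_apply, cs.inv_simple]
        calc s i * (s i * t * s i) * s i
            = (s i * s i) * t * (s i * s i) := by simp only [mul_assoc]
          _ = t := by rw [cs.simple_mul_simple_self, one_mul, mul_one]
      · rintro (h | h)
        · exact absurd h ht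
        · obtain ⟨a, ha, hat⟩ := List.mem_map.mp h
          have : a = s i * t * s i := by
            rw [← hat]
            simp only [MulAut.conj_apply]
            symm
            calc s i * (s i * a * (s i)⁻¹) * s i
                = (s i * s i) * a * ((s i)⁻¹ * s i) := by simp only [mul_assoc]
              _ = a := by rw [cs.simple_mul_simple_self, inv_mul_cancel, one_mul, mul_one]
          rwa [← this]

lemma nu_refl_self {t : W} (ht : cs.IsReflection t) : nu cs t t = 1 := by
  obtain ⟨w, i, rfl⟩ := ht
  set t := w * s i * w⁻¹ with hdef
  have h1 : w⁻¹ * t * w = s i := by rw [hdef]; group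
  have h2 : (w * s i)⁻¹ * t * (w * s i) = s i := by
    rw [hdef, mul_inv_rev, cs.inv_simple]
    calc s i * w⁻¹ * (w * s i * w⁻¹) * (w * s i)
        = s i * (w⁻¹ * w) * s i * (w⁻¹ * w) * s i := by simp only [mul_assoc]
      _ = s i := by
          rw [inv_mul_cancel]
          simp only [mul_one, one_mul]
          rw [cs.simple_mul_simple_self, one_mul]
  have expand : t = (w * s i) * w⁻¹ := by rw [hdef]
  rw [expand, nu_mul, nu_mul, h1]
  have h3 : nu cs w⁻¹ (s i) = nu cs w t := by
    rw [← h1]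
    exact nu_inv cs w t
  rw [h2, h3, nu_simple]
  unfold ind
  rw [if_pos rfl]
  rw [add_right_comm, CharTwo.add_self_eq_zero, zero_add]

lemma nu_eq_one_of_inversion {t w : W} (ht : cs.IsReflection t)
    (hlt : ℓ (t * w) < ℓ w) : nu cs w t = 1 := by
  rcases zmod_two_cases (nu cs w t) with h0 | h1
  · exfalso
    have htw : nu cs (t * w) t = 1 := by
      rw [nu_mul, nu_refl_self cs ht]
      have : t⁻¹ * t * t = t := by rw [inv_mul_cancel, one_mul]
      rw [this, h0, add_zero]
    obtain ⟨ω, hred, hw⟩ := cs.exists_reduced_word' (t * w)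
    rw [hw] at htw
    have hmem := (nu_mem_iff cs hred t).mp htw
    have hinv := cs.isLeftInversion_of_mem_leftInvSeq hred hmem
    rw [← hw] at hinv
    have heq : t * (t * w) = w := by rw [← mul_assoc, ht.mul_self, one_mul]
    have hh := hinv.2
    rw [heq] at hh
    exact absurd hh (Nat.lt_asymm hlt)
  · exact h1

theorem strongExchange_left {ω : List B} (hω : cs.IsReduced ω) {t : W}
    (ht : cs.IsReflection t) (hlt : ℓ (t * π ω) < ℓ (π ω)) :
    ∃ j, j < ω.length ∧ t * π ω = π (ω.eraseIdx j) := by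
  have h1 := nu_eq_one_of_inversion cs ht hlt
  have hmem := (nu_mem_iff cs hω t).mp h1
  obtain ⟨j, hj, hget⟩ := List.mem_iff_getElem.mp hmem
  rw [cs.length_leftInvSeq] at hj
  refine ⟨j, hj, ?_⟩
  have hgetD : (cs.leftInvSeq ω).getD j 1 = t := by
    rw [List.getD_eq_getElem _ _ (by rw [cs.length_leftInvSeq]; exact hj)]
    exact hget
  rw [← hgetD]
  exact cs.getD_leftInvSeq_mul_wordProd ω j

theorem strongExchange_right {ω : List B} (hω : cs.IsReduced ω) {t : W}
    (ht : cs.IsReflection t) (hlt : ℓ (π ω * t) < ℓ (π ω)) :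
    ∃ j, j < ω.length ∧ π ω * t = π (ω.eraseIdx j) := by
  have hrev : cs.IsReduced ω.reverse := (cs.isReduced_reverse_iff ω).mpr hω
  have hl : ℓ (t * π ω.reverse) < ℓ (π ω.reverse) := by
    rw [cs.wordProd_reverse]
    have : t * (π ω)⁻¹ = (π ω * t)⁻¹ := by rw [mul_inv_rev, ht.inv]
    rw [this, cs.length_inv, cs.length_inv]
    exact hlt
  have h1 := nu_eq_one_of_inversion cs ht hl
  have hmem := (nu_mem_iff cs hrev t).mp h1
  rw [cs.leftInvSeq_reverse, List.mem_reverse] at hmem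
  obtain ⟨j, hj, hget⟩ := List.mem_iff_getElem.mp hmem
  rw [cs.length_rightInvSeq] at hj
  refine ⟨j, hj, ?_⟩
  have hgetD : (cs.rightInvSeq ω).getD j 1 = t := by
    rw [List.getD_eq_getElem _ _ (by rw [cs.length_rightInvSeq]; exact hj)]
    exact hget
  rw [← hgetD]
  exact cs.wordProd_mul_getD_rightInvSeq ω j

end CoxAux

end Stage3

section Stage4

open List CoxeterSystem

namespace CoxAux

variable {B W : Type*} [Group W] {M : CoxeterMatrix B} (cs : CoxeterSystem M W)

local prefix:100 "s" => cs.simple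
local prefix:100 "π" => cs.wordProd
local prefix:100 "ℓ" => cs.length

lemma eraseIdx_append_left : ∀ (l₁ l₂ : List B) (j : ℕ), j < l₁.length →
    (l₁ ++ l₂).eraseIdx j = l₁.eraseIdx j ++ l₂ := by
  intro l₁
  induction l₁ with
  | nil => intro l₂ j h; simp at h
  | cons a l ih =>
    intro l₂ j h
    cases j with
    | zero => simp [List.eraseIdx]
    | succ j =>
      simp only [List.cons_append, List.eraseIdx_cons_succ, List.cons_append]
      rw [ih l₂ j (by simpa using h)]

lemma eraseIdx_append_right : ∀ (l₁ l₂ : List B) (j : ℕ), l₁.length ≤ j →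
    (l₁ ++ l₂).eraseIdx j = l₁ ++ l₂.eraseIdx (j - l₁.length) := by
  intro l₁
  induction l₁ with
  | nil => intro l₂ j h; simp
  | cons a l ih =>
    intro l₂ j h
    cases j with
    | zero => simp at h
    | succ j =>
      simp only [List.cons_append, List.eraseIdx_cons_succ, List.length_cons]
      rw [ih l₂ j (by simpa using h)]
      simp

variable {J : Set B}

lemma simple_mem_parabolic {i : B} (hi : i ∈ J) : s i ∈ CoxParabolic cs J :=
  Subgroup.subset_closure (Set.mem_image_of_mem _ hi)

lemma wordProd_mem_parabolic {ω : List B} (hω : ∀ i ∈ ω, i ∈ J) :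
    π ω ∈ CoxParabolic cs J := by
  induction ω with
  | nil => rw [wordProd_nil]; exact one_mem _
  | cons i ω ih =>
    rw [wordProd_cons]
    exact mul_mem (simple_mem_parabolic cs (hω i (by simp)))
      (ih (fun j hj => hω j (by simp [hj])))

lemma parabolic_exists_word {w : W} (hw : w ∈ CoxParabolic cs J) :
    ∃ ω : List B, (∀ i ∈ ω, i ∈ J) ∧ w = π ω := by
  unfold CoxParabolic at hw
  induction hw using Subgroup.closure_induction with
  | mem x hx =>
    obtain ⟨i, hi, rfl⟩ := hx
    exact ⟨[i], by simpa using hi, by simp⟩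
  | one => exact ⟨[], by simp, by simp⟩
  | mul x y _ _ hx hy =>
    obtain ⟨ω₁, h1, rfl⟩ := hx
    obtain ⟨ω₂, h2, rfl⟩ := hy
    refine ⟨ω₁ ++ ω₂, ?_, (cs.wordProd_append ω₁ ω₂).symm⟩
    intro i hi
    rcases List.mem_append.mp hi with h | h
    · exact h1 i h
    · exact h2 i h
  | inv x _ hx =>
    obtain ⟨ω, h1, rfl⟩ := hx
    exact ⟨ω.reverse, fun i hi => h1 i (List.mem_reverse.mp hi),
      (cs.wordProd_reverse ω).symm⟩

lemma exists_reduced_Jword {w : W} (hw : w ∈ CoxParabolic cs J) :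
    ∃ ω : List B, cs.IsReduced ω ∧ (∀ i ∈ ω, i ∈ J) ∧ w = π ω := by
  obtain ⟨ω, hJ, rfl⟩ := parabolic_exists_word cs hw
  clear hw
  induction ω with
  | nil => exact ⟨[], by simp [CoxeterSystem.IsReduced], by simp, by simp⟩
  | cons i ω ih =>
    obtain ⟨ω', hred, hJ', hprod⟩ := ih (fun j hj => hJ j (by simp [hj]))
    have hiJ : i ∈ J := hJ i (by simp)
    rcases cs.length_simple_mul (π ω') i with hup | hdown
    · refine ⟨i :: ω', ?_, ?_, ?_⟩
      · show ℓ (π (i :: ω')) = (i :: ω').length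
        rw [wordProd_cons, hup, hred]
        simp
      · intro j hj
        rcases List.mem_cons.mp hj with h | h
        · exact h ▸ hiJ
        · exact hJ' j h
      · rw [wordProd_cons, wordProd_cons, ← hprod]
    · -- descent case
      have hlt : ℓ (s i * π ω') < ℓ (π ω') := by
        have hne := cs.length_simple_mul_ne (π ω') i
        omega
      obtain ⟨j, hj, hex⟩ := strongExchange_left cs hred (cs.isReflection_simple i) hlt
      refine ⟨ω'.eraseIdx j, ?_, ?_, ?_⟩
      · show ℓ (π (ω'.eraseIdx j)) = (ω'.eraseIdx j).length
        have hlen : (ω'.eraseIdx j).length + 1 = ω'.length := List.length_eraseIdx_add_one hj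
        have h1 : ℓ (π (ω'.eraseIdx j)) ≤ (ω'.eraseIdx j).length := cs.length_wordProd_le _
        have h2 : ℓ (π (ω'.eraseIdx j)) = ℓ (s i * π ω') := by rw [hex]
        have : ℓ (s i * π ω') + 1 = ℓ (π ω') := by
          have hne := cs.length_simple_mul_ne (π ω') i
          omega
        rw [hred] at this
        omega
      · intro a ha
        exact hJ' a ((ω'.eraseIdx_sublist j).subset ha)
      · rw [wordProd_cons, hprod, hex]

/-- Additivity of lengths: `ℓ(u x) = ℓ(u) + ℓ(x)` for `u ∈ W_J`, `x ∈ X_J`. -/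
theorem length_parabolic_mul : ∀ (n : ℕ) (x : W), x ∈ CoxX cs J → ℓ x = n →
    ∀ u ∈ CoxParabolic cs J, ℓ (u * x) = ℓ u + ℓ x := by
  intro n
  induction n with
  | zero =>
    intro x _ hx0 u _
    rw [cs.length_eq_zero_iff.mp hx0, mul_one, cs.length_one, add_zero]
  | succ n ih =>
    intro x hxX hxlen u huP
    have hx1 : x ≠ 1 := by
      intro h
      rw [h, cs.length_one] at hxlen
      omega
    obtain ⟨m, hm⟩ := cs.exists_rightDescent_of_ne_one hx1
    set x' := x * s m with hx'def
    have hxlen' : ℓ x' + 1 = ℓ x := (cs.isRightDescent_iff).mp hm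
    have hxx' : x = x' * s m := by
      rw [hx'def, cs.simple_mul_simple_cancel_right]
    have hx'X : x' ∈ CoxX cs J := by
      intro i hi
      by_contra hcon
      push_neg at hcon
      have hlt : ℓ (s i * x') < ℓ x' := by
        have := cs.length_simple_mul_ne x' i
        omega
      have : ℓ (s i * x) ≤ ℓ (s i * x') + 1 := by
        rw [hxx', ← mul_assoc]
        have := cs.length_mul_le (s i * x') (s m)
        rw [cs.length_simple] at this
        exact this
      have hgt := hxX i hi
      omega
    have hx'n : ℓ x' = n := by omega
    -- key inductive fact
    have IH := fun u hu => ih x' hx'X hx'n u hu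
    have hux' : ℓ (u * x') = ℓ u + n := by rw [IH u huP, hx'n]
    rcases cs.length_mul_simple (u * x') m with hup | hdown
    · have hval : ℓ (u * x) = ℓ u + n + 1 := by
        rw [hxx', ← mul_assoc, hup, hux']
      omega
    · -- contradiction case
      exfalso
      obtain ⟨ωu, hredu, hJu, hprodu⟩ := exists_reduced_Jword cs huP
      obtain ⟨ωx, hredx, hprodx⟩ := cs.exists_reduced_word' x'
      have hcat : π (ωu ++ ωx) = u * x' := by
        rw [cs.wordProd_append, ← hprodu, ← hprodx]
      have hredcat : cs.IsReduced (ωu ++ ωx) := by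
        show ℓ (π (ωu ++ ωx)) = (ωu ++ ωx).length
        rw [hcat, List.length_append, ← hredu, ← hredx, ← hprodu, ← hprodx, hux', hx'n]
      have hlt : ℓ (π (ωu ++ ωx) * s m) < ℓ (π (ωu ++ ωx)) := by
        rw [hcat]
        omega
      obtain ⟨j, hj, hex⟩ := strongExchange_right cs hredcat (cs.isReflection_simple m) hlt
      rw [hcat] at hex
      by_cases hjlt : j < ωu.length
      · rw [eraseIdx_append_left _ _ _ hjlt, cs.wordProd_append] at hex
        set ut := π (ωu.eraseIdx j) with hutdef
        have hutP : ut ∈ CoxParabolic cs J :=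
          wordProd_mem_parabolic cs (fun a ha => hJu a ((ωu.eraseIdx_sublist j).subset ha))
        have hutlen : ℓ ut ≤ ωu.length - 1 := by
          have := cs.length_wordProd_le (ωu.eraseIdx j)
          have hlen := List.length_eraseIdx_add_one hjlt
          rw [← hutdef] at this
          omega
        set p := u⁻¹ * ut with hpdef
        have hpP : p ∈ CoxParabolic cs J := mul_mem (inv_mem huP) hutP
        have hxp : x = p * x' := by
          have h1 : u * x = ut * π ωx := by rw [hxx', ← mul_assoc, hex]
          rw [← hprodx] at h1
          rw [hpdef, mul_assoc, ← h1, ← mul_assoc, inv_mul_cancel, one_mul]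
        have hplen : ℓ (p * x') = ℓ p + n := by rw [IH p hpP, hx'n]
        have hp1 : ℓ p = 1 := by
          rw [← hxp] at hplen
          omega
        obtain ⟨ωp, hredp, hJp, hprodp⟩ := exists_reduced_Jword cs hpP
        have hlenp : ωp.length = 1 := by
          rw [← hredp, ← hprodp, hp1]
        obtain ⟨a, ha⟩ := List.length_eq_one_iff.mp hlenp
        have haJ : a ∈ J := hJp a (by simp [ha])
        have hpa : p = s a := by rw [hprodp, ha, cs.wordProd_singleton]
        have : s a * x = x' := by
          rw [hxp, hpa, cs.simple_mul_simple_cancel_left]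
        have hgt := hxX a haJ
        rw [this] at hgt
        omega
      · push_neg at hjlt
        rw [eraseIdx_append_right _ _ _ hjlt, cs.wordProd_append, ← hprodu] at hex
        have hxeq : x = π (ωx.eraseIdx (j - ωu.length)) := by
          have h2 : u * x = u * π (ωx.eraseIdx (j - ωu.length)) := by
            rw [hxx', ← mul_assoc]
            exact hex
          exact mul_left_cancel h2
        have hklt : j - ωu.length < ωx.length := by
          rw [List.length_append] at hj
          omega
        have hb1 : ℓ x ≤ (ωx.eraseIdx (j - ωu.length)).length := by
          rw [hxeq]; exact cs.length_wordProd_le _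
        have hlen := List.length_eraseIdx_add_one hklt
        have hb2 : ℓ x' = ωx.length := by rw [hprodx]; exact hredx
        omega

end CoxAux

end Stage4

section Stage5

open List CoxeterSystem

namespace CoxAux

variable {B W : Type*} [Group W] {M : CoxeterMatrix B} (cs : CoxeterSystem M W)

local prefix:100 "s" => cs.simple
local prefix:100 "π" => cs.wordProd
local prefix:100 "ℓ" => cs.length

/-- Every element is a prefix of a longest element. -/
theorem prefix_of_longest {w0 : W} (hw0 : ∀ w : W, ℓ w ≤ ℓ w0) :
    ∀ (n : ℕ) (v : W), ℓ v = n → ℓ v + ℓ (v⁻¹ * w0) = ℓ w0 := by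
  intro n
  induction n with
  | zero =>
    intro v hv
    rw [cs.length_eq_zero_iff.mp hv, inv_one, one_mul, cs.length_one, zero_add]
  | succ n ih =>
    intro v hv
    have hv1 : v ≠ 1 := by
      intro h; rw [h, cs.length_one] at hv; omega
    obtain ⟨m, hm⟩ := cs.exists_rightDescent_of_ne_one hv1
    set v' := v * s m with hv'def
    have hvlen' : ℓ v' + 1 = ℓ v := (cs.isRightDescent_iff).mp hm
    have hvv' : v = v' * s m := by rw [hv'def, cs.simple_mul_simple_cancel_right]
    have hv'n : ℓ v' = n := by omega
    have IH := ih v' hv'n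
    set z := v'⁻¹ * w0 with hzdef
    have hvinv : v⁻¹ * w0 = s m * z := by
      rw [hvv', hzdef, mul_inv_rev, cs.inv_simple, mul_assoc]
    rcases cs.length_simple_mul z m with hup | hdown
    · -- contradiction case
      exfalso
      obtain ⟨ωv, hredv, hprodv⟩ := cs.exists_reduced_word' v'
      obtain ⟨ωz, hredz, hprodz⟩ := cs.exists_reduced_word' z
      have hw0eq : v' * z = w0 := by
        rw [hzdef, ← mul_assoc, mul_inv_cancel, one_mul]
      have hcat : π (ωv ++ ωz) = w0 := by
        rw [cs.wordProd_append, ← hprodv, ← hprodz, hw0eq]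
      have hredcat : cs.IsReduced (ωv ++ ωz) := by
        show ℓ (π (ωv ++ ωz)) = (ωv ++ ωz).length
        rw [hcat, List.length_append, ← hredv, ← hredz, ← hprodv, ← hprodz]
        omega
      set t := v' * s m * v'⁻¹ with htdef
      have ht : cs.IsReflection t := ⟨v', m, rfl⟩
      have htw0 : t * w0 = v' * (s m * z) := by
        rw [htdef, ← hw0eq]
        simp only [mul_assoc]
        rw [inv_mul_cancel_left]
      have hlt : ℓ (t * w0) < ℓ w0 := by
        have hne := ht.length_mul_right_ne w0
        have hle := hw0 (t * w0)
        omega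
      rw [← hcat] at hlt
      obtain ⟨j, hj, hex⟩ := strongExchange_left cs hredcat ht hlt
      rw [hcat, htw0] at hex
      by_cases hjlt : j < ωv.length
      · rw [eraseIdx_append_left _ _ _ hjlt, cs.wordProd_append, ← hprodz] at hex
        have hveq : π (ωv.eraseIdx j) = v := by
          have h2 : π (ωv.eraseIdx j) * z = (v' * s m) * z := by
            rw [← hex]; simp only [mul_assoc]
          have := mul_right_cancel h2
          rw [this, ← hvv']
        have hb1 : ℓ v ≤ (ωv.eraseIdx j).length := by
          rw [← hveq]; exact cs.length_wordProd_le _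
        have hlen := List.length_eraseIdx_add_one hjlt
        have hb2 : ℓ v' = ωv.length := by rw [hprodv]; exact hredv
        omega
      · push_neg at hjlt
        rw [eraseIdx_append_right _ _ _ hjlt, cs.wordProd_append, ← hprodv] at hex
        have hzeq : s m * z = π (ωz.eraseIdx (j - ωv.length)) :=
          mul_left_cancel hex
        have hklt : j - ωv.length < ωz.length := by
          rw [List.length_append] at hj
          omega
        have hb1 : ℓ (s m * z) ≤ (ωz.eraseIdx (j - ωv.length)).length := by
          rw [hzeq]; exact cs.length_wordProd_le _
        have hlen := List.length_eraseIdx_add_one hklt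
        have hb2 : ℓ z = ωz.length := by rw [hprodz]; exact hredz
        omega
    · rw [hvinv]
      omega

variable {J : Set B}

/-- A prefix of an element of `X_J` is in `X_J`. -/
lemma prefix_mem_CoxX {v x : W} (hv : v ∈ CoxX cs J) (hx : CoxIsPrefix cs x v) :
    x ∈ CoxX cs J := by
  intro i hi
  by_contra hcon
  push_neg at hcon
  have hlt : ℓ (s i * x) < ℓ x := by
    have := cs.length_simple_mul_ne x i
    omega
  have hs : s i * v = (s i * x) * (x⁻¹ * v) := by
    simp only [mul_assoc]
    rw [mul_inv_cancel_left]
  have hle : ℓ (s i * v) ≤ ℓ (s i * x) + ℓ (x⁻¹ * v) := by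
    rw [hs]; exact cs.length_mul_le _ _
  have hgt := hv i hi
  unfold CoxIsPrefix at hx
  omega

end CoxAux

end Stage5

section Final

open CoxAux

theorem stmt6 {B W : Type*} [Fintype B] [Group W] [Fintype W]
    {M : CoxeterMatrix B} (cs : CoxeterSystem M W) (J : Set B) (w0 wJ : W)
    (hw0 : ∀ w : W, cs.length w ≤ cs.length w0)
    (hwJ : wJ ∈ CoxParabolic cs J ∧
      ∀ u ∈ CoxParabolic cs J, cs.length u ≤ cs.length wJ) :
    CoxX cs J = {x : W | CoxIsPrefix cs x (wJ * w0)} := by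
  obtain ⟨hp, hmax⟩ := hwJ
  -- prefix property of the longest element
  have F1 : ∀ u : W, cs.length u + cs.length (u⁻¹ * w0) = cs.length w0 := fun u =>
    prefix_of_longest cs hw0 (cs.length u) u rfl
  have G1 : ∀ u : W, cs.length (u * w0) + cs.length u = cs.length w0 := by
    intro u
    have := F1 u⁻¹
    rw [inv_inv, cs.length_inv] at this
    omega
  have hvlen : cs.length (wJ * w0) + cs.length wJ = cs.length w0 := G1 wJ
  -- (a) wJ * w0 ∈ X_J
  have hvX : wJ * w0 ∈ CoxX cs J := by
    intro i hi
    have h1 : cs.length (cs.simple i * wJ * w0) + cs.length (cs.simple i * wJ) = cs.length w0 :=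
      G1 (cs.simple i * wJ)
    have hmem : cs.simple i * wJ ∈ CoxParabolic cs J :=
      mul_mem (simple_mem_parabolic cs hi) hp
    have h2 : cs.length (cs.simple i * wJ) < cs.length wJ := by
      have hne := cs.length_simple_mul_ne wJ i
      have hle := hmax _ hmem
      omega
    have h3 : cs.length (cs.simple i * (wJ * w0)) = cs.length (cs.simple i * wJ * w0) := by
      rw [mul_assoc]
    omega
  ext x
  simp only [Set.mem_setOf_eq]
  constructor
  · intro hxX
    unfold CoxIsPrefix
    have h1 : cs.length (x⁻¹ * wJ * w0) + cs.length (x⁻¹ * wJ) = cs.length w0 :=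
      G1 (x⁻¹ * wJ)
    have h2 : cs.length (x⁻¹ * wJ) = cs.length (wJ⁻¹ * x) := by
      rw [← cs.length_inv, mul_inv_rev, inv_inv]
    have h3 : cs.length (wJ⁻¹ * x) = cs.length wJ⁻¹ + cs.length x :=
      length_parabolic_mul cs (cs.length x) x hxX rfl wJ⁻¹ (inv_mem hp)
    rw [cs.length_inv] at h3
    have h4 : cs.length (x⁻¹ * (wJ * w0)) = cs.length (x⁻¹ * wJ * w0) := by
      rw [mul_assoc]
    omega
  · intro hpre
    exact prefix_mem_CoxX cs hvX hpre

end Final
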